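/- The set S \ (E_{n_i})^{(i)} is an ideal of S = E(X,P), where (E_{n_i})^{(i)} is the submonoid of S consisting of transformations acting as an element of E_{n_i} on block C_i and as the identity elsewhere. Consequently, any generating set for S contains a generating set for (E_{n_i})^{(i)}. -/

import Mathlib

/-- The semigroup of transformations of `X = Σ q, Fin (n q)` preserving the partition
into the blocks `C_q = {q} × [n_q]`, as a submonoid of the full transformation monoid. -/
def TXP (m : ℕ) (n : Fin m → ℕ) : Submonoid (Function.End (Σ q : Fin m, Fin (n q))) where
  carrier := {f | ∀ q : Fin m, ∃ r : Fin m, ∀ x : Σ q : Fin m, Fin (n q), x.1 = q → (f x).1 = r}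
  one_mem' := fun q => ⟨q, fun _ hx => hx⟩
  mul_mem' := by
    intro a b ha hb q
    obtain ⟨r, hr⟩ := hb q
    obtain ⟨s, hs⟩ := ha r
    exact ⟨s, fun x hx => hs _ (hr x hx)⟩

/-- The submonoid of `T(X,P)` generated by its idempotents. -/
def EXP (m : ℕ) (n : Fin m → ℕ) : Submonoid (Function.End (Σ q : Fin m, Fin (n q))) :=
  Submonoid.closure {f | f ∈ TXP m n ∧ f * f = f}

/-- The copy `(E_{n_i})^{(i)}` of `E_{n_i}` inside `T(X,P)`: maps acting on block `C_i` as an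
element of `E_{n_i} = {1} ∪ (T_{n_i} \ S_{n_i})` and as the identity elsewhere. -/
def blockE (m : ℕ) (n : Fin m → ℕ) (i : Fin m) : Set (Function.End (Σ q : Fin m, Fin (n q))) :=
  {f | (∀ x : Σ q : Fin m, Fin (n q), x.1 ≠ i → f x = x) ∧
    ∃ g : Fin (n i) → Fin (n i), (g = id ∨ ¬ Function.Bijective g) ∧
      ∀ a : Fin (n i), f ⟨i, a⟩ = ⟨i, g a⟩}

namespace SingularBlockAux

variable {m : ℕ} {n : Fin m → ℕ}

/-- `u` fixes every point outside block `i`. -/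
def P1 (i : Fin m) (u : Function.End (Σ q : Fin m, Fin (n q))) : Prop :=
  ∀ x : Σ q : Fin m, Fin (n q), x.1 ≠ i → u x = x

/-- `u` maps block `i` into block `i`. -/
def P2 (i : Fin m) (u : Function.End (Σ q : Fin m, Fin (n q))) : Prop :=
  ∀ x : Σ q : Fin m, Fin (n q), x.1 = i → (u x).1 = i

theorem eq_mk {i : Fin m} :
    ∀ s : Σ q : Fin m, Fin (n q), s.1 = i → ∃ b : Fin (n i), s = ⟨i, b⟩ := by
  rintro ⟨q, a⟩ rfl
  exact ⟨a, rfl⟩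

theorem mk_inj {i : Fin m} {a b : Fin (n i)} :
    (⟨i, a⟩ : Σ q : Fin m, Fin (n q)) = ⟨i, b⟩ ↔ a = b := by
  simp

theorem mk_ne {i : Fin m} {a b : Fin (n i)} (h : a ≠ b) :
    (⟨i, a⟩ : Σ q : Fin m, Fin (n q)) ≠ ⟨i, b⟩ :=
  fun hh => h (mk_inj.mp hh)

theorem exp_le_txp : EXP m n ≤ TXP m n :=
  Submonoid.closure_le.mpr fun _ hf => hf.1

/-- Key lemma: if `f * g ∈ E(X,P)` satisfies `P1` and `P2`, and `f, g ∈ E(X,P)`, then both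
`f` and `g` satisfy `P1` and `P2`. -/
theorem main (i : Fin m) :
    ∀ g ∈ EXP m n, ∀ f ∈ EXP m n, P1 i (f * g) → P2 i (f * g) →
      (P1 i g ∧ P2 i g) ∧ (P1 i f ∧ P2 i f) := by
  intro g hg
  induction hg using Submonoid.closure_induction with
  | mem e he =>
    intro f hf h1 h2
    have hee : ∀ z, e (e z) = e z := fun z => congrFun he.2 z
    have H1 : ∀ z : Σ q : Fin m, Fin (n q), z.1 ≠ i → f (e z) = z := h1
    have H2 : ∀ z : Σ q : Fin m, Fin (n q), z.1 = i → (f (e z)).1 = i := h2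
    have claim1 : ∀ z : Σ q : Fin m, Fin (n q), z.1 ≠ i → e z = z := by
      intro z hz
      by_cases hei : (e z).1 = i
      · exfalso
        have t : (f (e (e z))).1 = i := H2 (e z) hei
        rw [hee z] at t
        rw [H1 z hz] at t
        exact hz t
      · have t : f (e (e z)) = e z := H1 (e z) hei
        rw [hee z] at t
        rw [H1 z hz] at t
        exact t.symm
    have claim2 : ∀ z : Σ q : Fin m, Fin (n q), z.1 = i → (e z).1 = i := by
      intro z hz
      by_contra hne
      have t : f (e (e z)) = e z := H1 (e z) hne
      rw [hee z] at t
      have s : (f (e z)).1 = i := H2 z hz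
      rw [t] at s
      exact hne s
    refine ⟨⟨claim1, claim2⟩, ?_, ?_⟩
    · intro z hz
      have t : f (e z) = z := H1 z hz
      rwa [claim1 z hz] at t
    · intro z hz
      obtain ⟨s, hs⟩ := exp_le_txp hf i
      have h1' : (f (e z)).1 = s := hs (e z) (claim2 z hz)
      have h2' : (f (e z)).1 = i := H2 z hz
      have hsi : s = i := h1'.symm.trans h2'
      have := hs z hz
      rwa [hsi] at this
  | one =>
    intro f hf h1 h2
    exact ⟨⟨fun _ _ => rfl, fun _ hz => hz⟩, h1, h2⟩
  | mul v w _ _ ihv ihw =>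
    intro f hf h1 h2
    rw [← mul_assoc] at h1 h2
    obtain ⟨⟨hw1, hw2⟩, hfv1, hfv2⟩ := ihw (f * v) (mul_mem hf ‹v ∈ EXP m n›) h1 h2
    obtain ⟨⟨hv1, hv2⟩, hf1, hf2⟩ := ihv f hf hfv1 hfv2
    refine ⟨⟨?_, ?_⟩, hf1, hf2⟩
    · intro z hz
      show v (w z) = z
      rw [hw1 z hz, hv1 z hz]
    · intro z hz
      show (v (w z)).1 = i
      exact hv2 _ (hw2 z hz)

theorem one_or_not_bij {u : Function.End (Σ q : Fin m, Fin (n q))} (hu : u ∈ EXP m n) :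
    u = 1 ∨ ¬ Function.Bijective u := by
  induction hu using Submonoid.closure_induction with
  | mem e he =>
    by_cases hb : Function.Bijective e
    · left
      funext x
      obtain ⟨y, hy⟩ := hb.2 x
      have t := congrFun he.2 y
      show e x = x
      calc e x = e (e y) := by rw [hy]
        _ = e y := t
        _ = x := hy
    · right; exact hb
  | one => left; rfl
  | mul v w _ _ ihv ihw =>
    rcases ihv with rfl | hv
    · rcases ihw with rfl | hw
      · left; rw [one_mul]
      · right; intro hb; rw [one_mul] at hb; exact hw hb
    · right
      intro hb
      apply hv
      have hsv : Function.Surjective v := by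
        intro y
        obtain ⟨x, hx⟩ := hb.2 y
        exact ⟨w x, hx⟩
      exact Finite.surjective_iff_bijective.1 hsv

theorem blockE_P {i : Fin m} {u : Function.End (Σ q : Fin m, Fin (n q))}
    (hu : u ∈ blockE m n i) : P1 i u ∧ P2 i u := by
  obtain ⟨h1, g, _, hg⟩ := hu
  refine ⟨h1, ?_⟩
  intro x hx
  obtain ⟨a, rfl⟩ := eq_mk x hx
  rw [hg a]

theorem mem_blockE_of {i : Fin m} {u : Function.End (Σ q : Fin m, Fin (n q))}
    (hu : u ∈ EXP m n) (h1 : P1 i u) (h2 : P2 i u) : u ∈ blockE m n i := by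
  have hb : ∀ a : Fin (n i), ∃ b, u ⟨i, a⟩ = ⟨i, b⟩ := fun a => eq_mk _ (h2 ⟨i, a⟩ rfl)
  choose g hg using hb
  refine ⟨h1, g, ?_, hg⟩
  rcases one_or_not_bij hu with rfl | hnb
  · left
    funext a
    have h : (⟨i, a⟩ : Σ q : Fin m, Fin (n q)) = ⟨i, g a⟩ := hg a
    exact (mk_inj.mp h).symm
  · right
    intro hgb
    apply hnb
    constructor
    · intro x y hxy
      by_cases hx : x.1 = i
      · by_cases hy : y.1 = i
        · obtain ⟨a, rfl⟩ := eq_mk x hx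
          obtain ⟨b, rfl⟩ := eq_mk y hy
          rw [hg a, hg b] at hxy
          rw [mk_inj] at hxy ⊢
          exact hgb.1 hxy
        · exfalso
          obtain ⟨a, rfl⟩ := eq_mk x hx
          rw [hg a, h1 y hy] at hxy
          exact hy (by rw [← hxy])
      · by_cases hy : y.1 = i
        · exfalso
          obtain ⟨b, rfl⟩ := eq_mk y hy
          rw [hg b, h1 x hx] at hxy
          exact hx (by rw [hxy])
        · rw [h1 x hx, h1 y hy] at hxy
          exact hxy
    · intro y
      by_cases hy : y.1 = i
      · obtain ⟨b, rfl⟩ := eq_mk y hy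
        obtain ⟨a, ha⟩ := hgb.2 b
        exact ⟨⟨i, a⟩, by rw [hg a, ha]⟩
      · exact ⟨y, h1 y hy⟩

/-- The elementary idempotent sending `⟨i,b⟩` to `⟨i,c⟩` and fixing everything else. -/
def Emap (i : Fin m) (b c : Fin (n i)) : Function.End (Σ q : Fin m, Fin (n q)) :=
  fun x => if x = ⟨i, b⟩ then ⟨i, c⟩ else x

theorem Emap_pos {i : Fin m} (b c : Fin (n i)) : Emap i b c ⟨i, b⟩ = ⟨i, c⟩ := if_pos rfl

theorem Emap_neg {i : Fin m} (b c : Fin (n i)) {x : Σ q : Fin m, Fin (n q)}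
    (h : x ≠ ⟨i, b⟩) : Emap i b c x = x := if_neg h

theorem Emap_mem {i : Fin m} {b c : Fin (n i)} (h : b ≠ c) : Emap i b c ∈ EXP m n := by
  apply Submonoid.subset_closure
  constructor
  · intro q
    refine ⟨q, ?_⟩
    intro x hx
    by_cases hxb : x = ⟨i, b⟩
    · subst hxb
      rw [Emap_pos]
      exact hx
    · rw [Emap_neg _ _ hxb]
      exact hx
  · funext x
    show Emap i b c (Emap i b c x) = Emap i b c x
    by_cases hxb : x = ⟨i, b⟩
    · subst hxb
      rw [Emap_pos, Emap_neg _ _ (mk_ne (fun hh => h hh.symm))]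
    · rw [Emap_neg _ _ hxb, Emap_neg _ _ hxb]

/-- The set of points moved by `u`. -/
noncomputable def Mv (u : Function.End (Σ q : Fin m, Fin (n q))) :
    Finset (Σ q : Fin m, Fin (n q)) := by
  classical exact Finset.univ.filter (fun x => u x ≠ x)

theorem mem_Mv {u : Function.End (Σ q : Fin m, Fin (n q))} {x : Σ q : Fin m, Fin (n q)} :
    x ∈ Mv u ↔ u x ≠ x := by
  classical simp [Mv]

/-- A permutation supported on block `i`, right-multiplied by an elementary collapse at a
fixed point of it, lies in `E(X,P)`. -/
theorem lemP (i : Fin m) : ∀ (N : ℕ) (π : Function.End (Σ q : Fin m, Fin (n q))),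
    (Mv π).card ≤ N → Function.Bijective π → P1 i π →
    ∀ b : Fin (n i), π ⟨i, b⟩ = ⟨i, b⟩ → ∀ a : Fin (n i), a ≠ b →
      π * Emap i b a ∈ EXP m n := by
  intro N
  induction N with
  | zero =>
    intro π hcard _ _ b _ a hab
    have hid : π = 1 := by
      funext x
      by_contra hx
      have hmem : x ∈ Mv π := mem_Mv.mpr hx
      have := Finset.card_pos.mpr ⟨x, hmem⟩
      omega
    rw [hid, one_mul]
    exact Emap_mem (fun hh => hab hh.symm)
  | succ N ih =>
    intro π hcard hbij hP1 b hb a hab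
    by_cases hone : π = 1
    · rw [hone, one_mul]
      exact Emap_mem (fun hh => hab hh.symm)
    have hex : ∃ x, π x ≠ x := by
      by_contra h
      push_neg at h
      exact hone (funext h)
    obtain ⟨x₀, hx₀⟩ := hex
    have hx₀i : x₀.1 = i := by
      by_contra hne
      exact hx₀ (hP1 x₀ hne)
    obtain ⟨c, rfl⟩ := eq_mk x₀ hx₀i
    have hπc : (π ⟨i, c⟩).1 = i := by
      by_contra hne
      exact hx₀ (hbij.1 (hP1 _ hne))
    obtain ⟨d, hd⟩ := eq_mk _ hπc
    have hcd : c ≠ d := fun h => hx₀ (by rw [hd, h])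
    have hcb : c ≠ b := fun h => hx₀ (by rw [h]; exact hb)
    have hdb : d ≠ b := by
      intro h
      apply hcb
      have heq : π ⟨i, c⟩ = π ⟨i, b⟩ := by rw [hd, hb, h]
      exact mk_inj.mp (hbij.1 heq)
    set sw : Function.End (Σ q : Fin m, Fin (n q)) :=
      fun x => if x = ⟨i, c⟩ then ⟨i, d⟩ else if x = ⟨i, d⟩ then ⟨i, c⟩ else x with hsw
    have sw_c : sw ⟨i, c⟩ = ⟨i, d⟩ := by simp [hsw]
    have sw_d : sw ⟨i, d⟩ = ⟨i, c⟩ := by simp [hsw, Ne.symm hcd]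
    have sw_other : ∀ x, x ≠ (⟨i, c⟩ : Σ q : Fin m, Fin (n q)) → x ≠ ⟨i, d⟩ → sw x = x := by
      intro x h1 h2
      simp [hsw, h1, h2]
    have sw_invol : ∀ x, sw (sw x) = x := by
      intro x
      by_cases h1 : x = ⟨i, c⟩
      · rw [h1, sw_c, sw_d]
      · by_cases h2 : x = ⟨i, d⟩
        · rw [h2, sw_d, sw_c]
        · rw [sw_other x h1 h2, sw_other x h1 h2]
    have sw_bij : Function.Bijective sw := Function.Involutive.bijective sw_invol
    have hbij' : Function.Bijective (π * sw) := Function.Bijective.comp hbij sw_bij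
    have hP1' : P1 i (π * sw) := by
      intro z hz
      show π (sw z) = z
      rw [sw_other z (fun h => hz (by rw [h])) (fun h => hz (by rw [h]))]
      exact hP1 z hz
    have hfixb : (π * sw) ⟨i, b⟩ = ⟨i, b⟩ := by
      show π (sw ⟨i, b⟩) = ⟨i, b⟩
      rw [sw_other _ (mk_ne (fun h => hcb h.symm)) (mk_ne (fun h => hdb h.symm))]
      exact hb
    have hfixd : (π * sw) ⟨i, d⟩ = ⟨i, d⟩ := by
      show π (sw ⟨i, d⟩) = ⟨i, d⟩
      rw [sw_d]
      exact hd
    have hdmem : (⟨i, d⟩ : Σ q : Fin m, Fin (n q)) ∈ Mv π := by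
      rw [mem_Mv]
      intro h
      exact hcd (mk_inj.mp (hbij.1 (h.trans hd.symm))).symm
    have hmv : Mv (π * sw) ⊆ Mv π \ {⟨i, d⟩} := by
      intro z hz
      rw [mem_Mv] at hz
      rw [Finset.mem_sdiff, mem_Mv, Finset.mem_singleton]
      constructor
      · by_cases h1 : z = ⟨i, c⟩
        · rw [h1, hd]
          exact mk_ne (fun h => hcd h.symm)
        · by_cases h2 : z = ⟨i, d⟩
          · exfalso
            apply hz
            rw [h2]
            exact hfixd
          · intro h
            apply hz
            show π (sw z) = z
            rw [sw_other z h1 h2]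
            exact h
      · intro h
        apply hz
        rw [h]
        exact hfixd
    have hcard' : (Mv (π * sw)).card ≤ N := by
      have h1' := Finset.card_le_card hmv
      have h2' : (Mv π \ {⟨i, d⟩}).card = (Mv π).card - 1 := by
        rw [Finset.card_sdiff_of_subset (Finset.singleton_subset_iff.mpr hdmem), Finset.card_singleton]
      have h3' := Finset.card_pos.mpr ⟨_, hdmem⟩
      omega
    have hIH := ih (π * sw) hcard' hbij' hP1' b hfixb d hdb
    have harg : ∀ x, sw (Emap i b d (Emap i d c (Emap i c b (Emap i b a x)))) =
        Emap i b a x := by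
      intro x
      by_cases h1 : x = ⟨i, b⟩
      · subst h1
        rw [Emap_pos]
        by_cases hac : a = c
        · subst hac
          rw [Emap_pos, Emap_neg _ _ (mk_ne (fun h => hdb h.symm)), Emap_pos, sw_d]
        · by_cases had : a = d
          · subst had
            rw [Emap_neg _ _ (mk_ne hac), Emap_pos, Emap_neg _ _ (mk_ne hcb), sw_c]
          · rw [Emap_neg _ _ (mk_ne hac), Emap_neg _ _ (mk_ne had),
              Emap_neg _ _ (mk_ne hab), sw_other _ (mk_ne hac) (mk_ne had)]
      · rw [Emap_neg _ _ h1]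
        by_cases h2 : x = ⟨i, c⟩
        · subst h2
          rw [Emap_pos, Emap_neg _ _ (mk_ne (fun h => hdb h.symm)), Emap_pos, sw_d]
        · by_cases h3 : x = ⟨i, d⟩
          · subst h3
            rw [Emap_neg _ _ (mk_ne (fun h => hcd h.symm)),
              Emap_pos, Emap_neg _ _ (mk_ne hcb), sw_c]
          · rw [Emap_neg _ _ h2, Emap_neg _ _ h3, Emap_neg _ _ h1, sw_other _ h2 h3]
    have key : π * Emap i b a =
        (((π * sw) * Emap i b d) * Emap i d c) * Emap i c b * Emap i b a := by
      funext x
      show π (Emap i b a x) =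
        π (sw (Emap i b d (Emap i d c (Emap i c b (Emap i b a x)))))
      rw [harg x]
    rw [key]
    exact mul_mem (mul_mem (mul_mem hIH (Emap_mem (fun h => hcd h.symm)))
      (Emap_mem hcb)) (Emap_mem (fun h => hab h.symm))
  
/-- Howie-type lemma: every non-bijective transformation supported on block `i` lies in
`E(X,P)`. -/
theorem lemH (i : Fin m) : ∀ (N : ℕ) (u : Function.End (Σ q : Fin m, Fin (n q))),
    (Mv u).card ≤ N → P1 i u → P2 i u → ¬ Function.Bijective u → u ∈ EXP m n := by
  intro N
  induction N with
  | zero =>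
    intro u hcard h1 h2 hnb
    exfalso
    have hni : ¬ Function.Injective u := fun hinj => hnb (Finite.injective_iff_bijective.1 hinj)
    obtain ⟨x, y, hxy, hne⟩ := Function.not_injective_iff.mp hni
    have hex : ∃ z, u z ≠ z := by
      by_contra h
      push_neg at h
      exact hne ((h x).symm.trans (hxy.trans (h y)))
    obtain ⟨z, hz⟩ := hex
    have := Finset.card_pos.mpr ⟨z, mem_Mv.mpr hz⟩
    omega
  | succ N ih =>
    intro u hcard h1 h2 hnb
    have hni : ¬ Function.Injective u := fun hinj => hnb (Finite.injective_iff_bijective.1 hinj)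
    obtain ⟨x, y, hxy, hne⟩ := Function.not_injective_iff.mp hni
    have hx : x.1 = i := by
      by_contra hxn
      have hux : u x = x := h1 x hxn
      by_cases hyn : y.1 = i
      · have t := h2 y hyn
        rw [← hxy, hux] at t
        exact hxn t
      · exact hne (by rw [← hux, hxy, h1 y hyn])
    have hy : y.1 = i := by
      by_contra hyn
      have huy : u y = y := h1 y hyn
      have t := h2 x hx
      rw [hxy, huy] at t
      exact hyn t
    obtain ⟨p, rfl⟩ := eq_mk x hx
    obtain ⟨q, rfl⟩ := eq_mk y hy
    have hpq : p ≠ q := fun h => hne (by rw [h])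
    have key : ∀ p q : Fin (n i), p ≠ q → u ⟨i, p⟩ = u ⟨i, q⟩ → u ⟨i, q⟩ ≠ ⟨i, q⟩ →
        u ∈ EXP m n := by
      intro p q hpq hcol hmoved
      classical
      set g : Function.End (Σ q : Fin m, Fin (n q)) :=
        Function.update u ⟨i, q⟩ ⟨i, q⟩ with hgdef
      have hg_at : g ⟨i, q⟩ = ⟨i, q⟩ := Function.update_self _ _ _
      have hg_ne : ∀ x, x ≠ (⟨i, q⟩ : Σ q : Fin m, Fin (n q)) → g x = u x :=
        fun x h => Function.update_of_ne h _ _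
      have hfac : u = g * Emap i q p := by
        funext z
        show u z = g (Emap i q p z)
        by_cases hzq : z = ⟨i, q⟩
        · subst hzq
          rw [Emap_pos, hg_ne _ (mk_ne hpq)]
          exact hcol.symm
        · rw [Emap_neg _ _ hzq, hg_ne z hzq]
      have hP1g : P1 i g := by
        intro z hz
        rw [hg_ne z (fun h => hz (by rw [h]))]
        exact h1 z hz
      have hP2g : P2 i g := by
        intro z hz
        by_cases hzq : z = ⟨i, q⟩
        · rw [hzq, hg_at]
        · rw [hg_ne z hzq]
          exact h2 z hz
      have hqmem : (⟨i, q⟩ : Σ q : Fin m, Fin (n q)) ∈ Mv u := mem_Mv.mpr hmoved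
      have hmv : Mv g ⊆ Mv u \ {⟨i, q⟩} := by
        intro z hz
        rw [mem_Mv] at hz
        rw [Finset.mem_sdiff, mem_Mv, Finset.mem_singleton]
        constructor
        · by_cases hzq : z = ⟨i, q⟩
          · exfalso
            apply hz
            rw [hzq]
            exact hg_at
          · rwa [hg_ne z hzq] at hz
        · intro hzq
          apply hz
          rw [hzq]
          exact hg_at
      have hcardg : (Mv g).card ≤ N := by
        have h1' := Finset.card_le_card hmv
        have h2' : (Mv u \ {⟨i, q⟩}).card = (Mv u).card - 1 := by
          rw [Finset.card_sdiff_of_subset (Finset.singleton_subset_iff.mpr hqmem), Finset.card_singleton]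
        have h3' := Finset.card_pos.mpr ⟨_, hqmem⟩
        omega
      by_cases hgb : Function.Bijective g
      · rw [hfac]
        exact lemP i (Mv g).card g le_rfl hgb hP1g q hg_at p hpq
      · rw [hfac]
        exact mul_mem (ih g hcardg hP1g hP2g hgb) (Emap_mem (fun h => hpq h.symm))
    by_cases hq : u ⟨i, q⟩ = ⟨i, q⟩
    · refine key q p (fun h => hpq h.symm) hxy.symm ?_
      rw [hxy, hq]
      exact mk_ne (fun h => hpq h.symm)
    · exact key p q hpq hxy hq

theorem blockE_sub_EXP {i : Fin m} : blockE m n i ⊆ (EXP m n : Set _) := by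
  intro u hu
  obtain ⟨h1, g, hgo, hg⟩ := hu
  rcases hgo with rfl | hgnb
  · have hu1 : u = 1 := by
      funext x
      by_cases hx : x.1 = i
      · obtain ⟨a, rfl⟩ := eq_mk x hx
        rw [hg a]
        rfl
      · exact h1 x hx
    rw [hu1]
    exact one_mem _
  · apply lemH i (Mv u).card u le_rfl h1
    · intro x hx
      obtain ⟨a, rfl⟩ := eq_mk x hx
      rw [hg a]
    · intro hub
      apply hgnb
      constructor
      · intro a b hab
        have t : u ⟨i, a⟩ = u ⟨i, b⟩ := by rw [hg a, hg b, hab]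
        exact mk_inj.mp (hub.1 t)
      · intro b
        obtain ⟨x, hxe⟩ := hub.2 ⟨i, b⟩
        have hx : x.1 = i := by
          by_contra hxn
          rw [h1 x hxn] at hxe
          exact hxn (by rw [hxe])
        obtain ⟨a, rfl⟩ := eq_mk x hx
        rw [hg a] at hxe
        exact ⟨a, mk_inj.mp hxe⟩

theorem list_step (i : Fin m) (G : Set (Function.End (Σ q : Fin m, Fin (n q))))
    (hGsub : G ⊆ (EXP m n : Set _)) (hGgen : Submonoid.closure G = EXP m n) :
    ∀ l : List (Function.End (Σ q : Fin m, Fin (n q))), (∀ y ∈ l, y ∈ G) →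
      l.prod ∈ blockE m n i → l.prod ∈ Submonoid.closure (G ∩ blockE m n i) := by
  intro l
  induction l with
  | nil =>
    intro _ _
    exact one_mem _
  | cons a l ihl =>
    intro hl hB
    have haG : a ∈ G := hl a (List.mem_cons_self)
    have hlG : ∀ y ∈ l, y ∈ G := fun y hy => hl y (List.mem_cons_of_mem a hy)
    have haE : a ∈ EXP m n := hGsub haG
    have hlE : l.prod ∈ EXP m n := by
      rw [← hGgen]
      exact list_prod_mem (fun y hy => Submonoid.subset_closure (hlG y hy))
    rw [List.prod_cons] at hB ⊢
    have hP := blockE_P hB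
    obtain ⟨⟨hl1, hl2⟩, ha1, ha2⟩ := main i l.prod hlE a haE hP.1 hP.2
    have haB : a ∈ blockE m n i := mem_blockE_of haE ha1 ha2
    have hlB : l.prod ∈ blockE m n i := mem_blockE_of hlE hl1 hl2
    exact mul_mem (Submonoid.subset_closure ⟨haG, haB⟩) (ihl hlG hlB)

end SingularBlockAux

open SingularBlockAux in
/-- `S \ (E_{n_i})^{(i)}` is an ideal of `S = E(X,P)`; consequently any generating set of
`S` contains a generating set of `(E_{n_i})^{(i)}`. -/
theorem singular_block_complement_ideal (m : ℕ) (n : Fin m → ℕ) (i : Fin m) :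
    (∀ f ∈ EXP m n, f ∉ blockE m n i → ∀ g ∈ EXP m n,
        f * g ∉ blockE m n i ∧ g * f ∉ blockE m n i) ∧
    (∀ G : Set (Function.End (Σ q : Fin m, Fin (n q))), G ⊆ (EXP m n : Set _) →
        Submonoid.closure G = EXP m n →
        blockE m n i ⊆ (Submonoid.closure (G ∩ blockE m n i) : Set _)) := by
  constructor
  · intro f hf hfB g hg
    constructor
    · intro hmem
      have hP := blockE_P hmem
      obtain ⟨-, hf1, hf2⟩ := main i g hg f hf hP.1 hP.2
      exact hfB (mem_blockE_of hf hf1 hf2)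
    · intro hmem
      have hP := blockE_P hmem
      obtain ⟨⟨hf1, hf2⟩, -⟩ := main i f hf g hg hP.1 hP.2
      exact hfB (mem_blockE_of hf hf1 hf2)
  · intro G hGsub hGgen u huB
    have huE : u ∈ EXP m n := blockE_sub_EXP huB
    have huG : u ∈ Submonoid.closure G := by rw [hGgen]; exact huE
    obtain ⟨l, hl, rfl⟩ := Submonoid.exists_list_of_mem_closure huG
    exact list_step i G hGsub hGgen l hl huB
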